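/- (Value differences under 1-period finite dependence, equation (8).) Let Z be a finite nonempty set and D a finite nonempty set with a distinguished baseline action 0, β ∈ ℝ, and let V : Z → ℝ, v : Z × D → ℝ, u : Z × D → ℝ, ψ : D × Z → ℝ, f : Z × D → Z → ℝ satisfy, for all z, d: (i) V(z) = ψ(d, z) + v(z, d), and (ii) v(z, d) = u(z, d) + β Σ_{z'} V(z') f(z' | z, d). Let w : Z × D → ℝ have Σ_{d'} w(z₁, d') = 1 for every z₁, and define ū^w, ψ̄^w, f̄^w as the w-weighted averages of u, ψ, f over actions. Write f̃(z₁ | z, d) = f(z₁ | z, d) − f(z₁ | z, 0) and ũ(z, d) = u(z, d) − u(z, 0). If the 1-period dependence condition Σ_{z₁} f̄^w(z₂ | z₁) f̃(z₁ | z, d) = 0 holds for all z, z₂ ∈ Z and d ∈ D, then for all z, d: v(z, d) − v(z, 0) = ũ(z, d) + β Σ_{z₁} [ū^w(z₁) + ψ̄^w(z₁)] f̃(z₁ | z, d); in particular the value differences do not involve V. -/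
import Mathlib


/-- Value differences under 1-period finite dependence (equation (8)): if the
`w`-weighted forward transition kills the one-step transition differences
relative to the baseline action `d₀`, then value differences between any action
and the baseline are expressed using only one-period-ahead weighted payoffs and
ψ-corrections; in particular they do not involve the integrated value `V`. -/
theorem value_differences_one_period_finite_dependence
    {Z D : Type*} [Fintype Z] [Fintype D] [Nonempty Z] [Nonempty D]
    (d₀ : D) (β : ℝ) (V : Z → ℝ) (v : Z → D → ℝ) (u : Z → D → ℝ) (ψ : D → Z → ℝ)
    (f : Z → D → Z → ℝ)
    (hAM : ∀ z d, V z = ψ d z + v z d)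
    (hBellman : ∀ z d, v z d = u z d + β * ∑ z' : Z, V z' * f z d z')
    (w : Z → D → ℝ) (hw : ∀ z₁, ∑ d' : D, w z₁ d' = 1)
    (ubar : Z → ℝ) (hubar : ∀ z₁, ubar z₁ = ∑ d' : D, w z₁ d' * u z₁ d')
    (ψbar : Z → ℝ) (hψbar : ∀ z₁, ψbar z₁ = ∑ d' : D, w z₁ d' * ψ d' z₁)
    (fbar : Z → Z → ℝ) (hfbar : ∀ z₁ z₂, fbar z₁ z₂ = ∑ d' : D, w z₁ d' * f z₁ d' z₂)
    (hdep : ∀ (z : Z) (z₂ : Z) (d : D),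
      ∑ z₁ : Z, fbar z₁ z₂ * (f z d z₁ - f z d₀ z₁) = 0) :
    ∀ (z : Z) (d : D),
      v z d - v z d₀ = (u z d - u z d₀)
        + β * ∑ z₁ : Z, (ubar z₁ + ψbar z₁) * (f z d z₁ - f z d₀ z₁) := by
  have hV : ∀ z₁, V z₁ = ubar z₁ + ψbar z₁ + β * ∑ z₂ : Z, V z₂ * fbar z₁ z₂ := by
    intro z₁
    have h1 : V z₁ = ∑ d' : D, w z₁ d' * (ψ d' z₁ + v z₁ d') := by
      calc V z₁ = (∑ d' : D, w z₁ d') * V z₁ := by rw [hw z₁]; ring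
        _ = ∑ d' : D, w z₁ d' * V z₁ := by rw [Finset.sum_mul]
        _ = ∑ d' : D, w z₁ d' * (ψ d' z₁ + v z₁ d') := by
            refine Finset.sum_congr rfl fun d' _ => by rw [← hAM z₁ d']
    rw [h1]
    simp only [hBellman z₁]
    rw [hubar, hψbar]
    have h2 : ∀ z₂ : Z, V z₂ * fbar z₁ z₂ = ∑ d' : D, w z₁ d' * (V z₂ * f z₁ d' z₂) := by
      intro z₂
      rw [hfbar, Finset.mul_sum]
      refine Finset.sum_congr rfl fun d' _ => by ring
    simp only [h2]
    rw [Finset.sum_comm (s := Finset.univ) (t := Finset.univ)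
      (f := fun z₂ d' => w z₁ d' * (V z₂ * f z₁ d' z₂))]
    rw [← Finset.sum_add_distrib, Finset.mul_sum, ← Finset.sum_add_distrib]
    refine Finset.sum_congr rfl fun d' _ => ?_
    simp only [Finset.mul_sum, mul_add]
    ring_nf
  intro z d
  have key : ∑ z₁ : Z, V z₁ * (f z d z₁ - f z d₀ z₁)
      = ∑ z₁ : Z, (ubar z₁ + ψbar z₁) * (f z d z₁ - f z d₀ z₁) := by
    have step1 : ∑ z₁ : Z, V z₁ * (f z d z₁ - f z d₀ z₁)
        = ∑ z₁ : Z, ((ubar z₁ + ψbar z₁) * (f z d z₁ - f z d₀ z₁)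
            + β * ∑ z₂ : Z, V z₂ * fbar z₁ z₂ * (f z d z₁ - f z d₀ z₁)) := by
      refine Finset.sum_congr rfl fun z₁ _ => ?_
      rw [hV z₁, add_mul, mul_assoc, Finset.sum_mul]
    rw [step1, Finset.sum_add_distrib]
    have step2 : ∑ z₁ : Z, β * ∑ z₂ : Z, V z₂ * fbar z₁ z₂ * (f z d z₁ - f z d₀ z₁)
        = β * ∑ z₂ : Z, V z₂ * ∑ z₁ : Z, fbar z₁ z₂ * (f z d z₁ - f z d₀ z₁) := by
      rw [← Finset.mul_sum, Finset.sum_comm]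
      congr 1
      refine Finset.sum_congr rfl fun z₂ _ => ?_
      rw [Finset.mul_sum]
      refine Finset.sum_congr rfl fun z₁ _ => by ring
    rw [step2]
    simp [hdep z _ d]
  rw [hBellman z d, hBellman z d₀]
  rw [← key]
  have : ∑ z₁ : Z, V z₁ * (f z d z₁ - f z d₀ z₁)
      = (∑ z' : Z, V z' * f z d z') - ∑ z' : Z, V z' * f z d₀ z' := by
    rw [← Finset.sum_sub_distrib]
    refine Finset.sum_congr rfl fun z' _ => by ring
  rw [this]; ring
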